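/- Alpha Spending with Rewards is a special case of Generalized Alpha Investing: given an Alpha Spending with Rewards procedure with parameter k > 0, wealth W, levels α_j and rewards ψ_j satisfying ψ_j ≤ min(α_j/ρ̄_j + α/k, 1 − (1−α)/k), the rescaled process W'(j) = k·W(j) with costs φ_j = k·α_j and rewards ψ'_j = k·ψ_j is a Generalized Alpha Investing procedure, i.e. W'(0) = αη, W'(j) = W'(j-1) − φ_j + R_j·ψ'_j, W'(j) ≥ 0, and 0 ≤ ψ'_j ≤ min(φ_j/ρ̄_j + α, φ_j/α_j + α − 1). -/

import Mathlib

/-- Alpha Spending with Rewards is a special case of Generalized Alpha Investing: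
rescaling the wealth by `k` (`W' = k·W`, costs `φ_j = k·α_j`, rewards
`ψ'_j = k·ψ_j`) yields a Generalized Alpha Investing procedure. -/
theorem asr_special_case_of_gai
    (α η k : ℝ) (hα0 : 0 < α) (hα1 : α < 1) (hη : 0 < η) (hk : 0 < k)
    (W αl ψ ρ R : ℕ → ℝ)
    (hαl : ∀ j, 0 < αl j) (hρ : ∀ j, 0 < ρ j)
    (hW0 : W 0 = α * η / k)
    (hupd : ∀ j, 1 ≤ j → W j = W (j - 1) - αl j + R j * ψ j)
    (hWnn : ∀ j, 0 ≤ W j)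
    (hψnn : ∀ j, 0 ≤ ψ j)
    (hψle : ∀ j, ψ j ≤ min (αl j / ρ j + α / k) (1 - (1 - α) / k)) :
    k * W 0 = α * η ∧
      (∀ j, 1 ≤ j → k * W j = k * W (j - 1) - k * αl j + R j * (k * ψ j)) ∧
      (∀ j, 0 ≤ k * W j) ∧
      (∀ j, 0 ≤ k * ψ j ∧
        k * ψ j ≤ min ((k * αl j) / ρ j + α) ((k * αl j) / αl j + α - 1)) := by
  refine ⟨by rw [hW0]; field_simp, fun j hj => by rw [hupd j hj]; ring,
    fun j => mul_nonneg hk.le (hWnn j), fun j =>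
    ⟨mul_nonneg hk.le (hψnn j), le_min ?_ ?_⟩⟩
  · have h := (le_min_iff.mp (hψle j)).1
    have : k * ψ j ≤ k * (αl j / ρ j + α / k) := by
      exact mul_le_mul_of_nonneg_left h hk.le
    calc k * ψ j ≤ k * (αl j / ρ j + α / k) := this
      _ = k * αl j / ρ j + α := by field_simp
  · have h := (le_min_iff.mp (hψle j)).2
    have : k * ψ j ≤ k * (1 - (1 - α) / k) := mul_le_mul_of_nonneg_left h hk.le
    calc k * ψ j ≤ k * (1 - (1 - α) / k) := this
      _ = k * αl j / αl j + α - 1 := by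
          rw [mul_div_assoc, div_self (hαl j).ne']; field_simp; ring
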